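/- Let c be a continuous function on [-h,0] with sup c < π²/(4h²), and let u ∈ C²((-h,0)) ∩ C¹([-h,0]) satisfy -u'' - c·u ≥ 0 on (-h,0), u(0) = 0, and u'(0) > 0. Then u < 0 on [-h,0). -/

import Mathlib

set_option maxHeartbeats 1000000

open Set Filter Topology

/-- Maximum principle lemma, part (iii): if `sup c < π²/(4h²)`, `-u'' - c·u ≥ 0` on `(-h,0)`,
`u(0) = 0` and `u'(0) > 0`, then `u < 0` on `[-h,0)`. -/
theorem stmt2 (h : ℝ) (hh : 0 < h) (c u u' u'' : ℝ → ℝ)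
    (hc : ContinuousOn c (Set.Icc (-h) 0))
    (hsup : sSup (c '' Set.Icc (-h) 0) < Real.pi ^ 2 / (4 * h ^ 2))
    (hu : ContinuousOn u (Set.Icc (-h) 0))
    (hu' : ContinuousOn u' (Set.Icc (-h) 0))
    (hd : ∀ y ∈ Set.Icc (-h) 0, HasDerivWithinAt u (u' y) (Set.Icc (-h) 0) y)
    (hder : ∀ y ∈ Set.Ioo (-h) 0, HasDerivAt u' (u'' y) y)
    (hineq : ∀ y ∈ Set.Ioo (-h) 0, 0 ≤ -u'' y - c y * u y)
    (hbc : u 0 = 0) (hdpos : 0 < u' 0) :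
    ∀ y ∈ Set.Ico (-h) 0, u y < 0 := by
  have h0 : (-h : ℝ) < 0 := by linarith
  have hpi := Real.pi_pos
  -- choose q
  set P : ℝ := Real.pi ^ 2 / (4 * h ^ 2) with hP_def
  have hP : 0 < P := by positivity
  set M : ℝ := sSup (c '' Set.Icc (-h) 0) with hM_def
  have hMle : ∀ y ∈ Set.Icc (-h) 0, c y ≤ M := by
    intro y hy
    exact le_csSup ((isCompact_Icc.image_of_continuousOn hc).bddAbove)
      (Set.mem_image_of_mem _ hy)
  set K : ℝ := max M 0 with hK_def
  have hK0 : 0 ≤ K := le_max_right _ _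
  have hKP : K < P := max_lt hsup hP
  set q2 : ℝ := (K + P) / 2 with hq2_def
  have hq2pos : 0 < q2 := by positivity
  have hKq2 : K < q2 := by simp only [hq2_def]; linarith
  have hq2P : q2 < P := by simp only [hq2_def]; linarith
  set q : ℝ := Real.sqrt q2 with hq_def
  have hqsq : q ^ 2 = q2 := Real.sq_sqrt hq2pos.le
  have hqpos : 0 < q := Real.sqrt_pos.mpr hq2pos
  have hqh : q * h < Real.pi / 2 := by
    have h2 : (q * h) ^ 2 < (Real.pi / 2) ^ 2 := by
      have hh2 : (0:ℝ) < h ^ 2 := by positivity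
      have h3 : q2 * h ^ 2 < P * h ^ 2 := mul_lt_mul_of_pos_right hq2P hh2
      have hPh : P * h ^ 2 = Real.pi ^ 2 / 4 := by
        rw [hP_def]; field_simp
      nlinarith [hqsq]
    exact lt_of_pow_lt_pow_left₀ 2 (by positivity) h2
  have hcos : ∀ y ∈ Set.Icc (-h) 0, 0 < Real.cos (q * y) := by
    intro y hy
    apply Real.cos_pos_of_mem_Ioo
    constructor
    · have : q * (-h) ≤ q * y := by nlinarith [hy.1]
      nlinarith
    · nlinarith [hy.2]
  -- u < 0 near 0 on the left
  have hslope0 := hasDerivWithinAt_iff_tendsto_slope.mp (hd 0 ⟨h0.le, le_refl 0⟩)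
  have hev0 : ∀ᶠ y in 𝓝[Set.Icc (-h) 0 \ {0}] 0, 0 < slope u 0 y :=
    hslope0.eventually (eventually_gt_nhds hdpos)
  have hmono0 : 𝓝[Set.Ioo (-h) 0] (0:ℝ) ≤ 𝓝[Set.Icc (-h) 0 \ {0}] 0 := by
    apply nhdsWithin_mono
    intro y hy
    exact ⟨⟨hy.1.le, hy.2.le⟩, ne_of_lt hy.2⟩
  have hev0' : ∀ᶠ y in 𝓝[<] (0:ℝ), 0 < slope u 0 y := by
    rw [← nhdsWithin_Ioo_eq_nhdsLT h0]
    exact hev0.filter_mono hmono0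
  obtain ⟨l, hl, hl'⟩ := mem_nhdsLT_iff_exists_Ioo_subset.mp hev0'
  set c₀ : ℝ := max l (-h) with hc₀_def
  have hc₀0 : c₀ < 0 := max_lt hl h0
  have hc₀h : -h ≤ c₀ := le_max_right _ _
  have hIoo : ∀ y ∈ Set.Ioo c₀ (0:ℝ), u y < 0 := by
    intro y hy
    have hy' : y ∈ Set.Ioo l 0 := ⟨lt_of_le_of_lt (le_max_left _ _) hy.1, hy.2⟩
    have hs := hl' hy'
    simp only [Set.mem_setOf_eq] at hs
    rw [slope_def_field, hbc] at hs
    simp only [sub_zero] at hs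
    rcases div_pos_iff.mp hs with ⟨h1, h2⟩ | ⟨h1, h2⟩
    · linarith [hy.2]
    · exact h1
  -- contradiction setup
  intro y₁ hy₁
  by_contra hpos
  push_neg at hpos
  have hy₁c₀ : y₁ ≤ c₀ := by
    by_contra hgt
    push_neg at hgt
    exact absurd hpos (not_le.mpr (hIoo y₁ ⟨hgt, hy₁.2⟩))
  -- the set S of nonnegative points
  set S : Set ℝ := Set.Icc (-h) c₀ ∩ u ⁻¹' Set.Ici 0 with hS_def
  have hS_sub : Set.Icc (-h) c₀ ⊆ Set.Icc (-h) 0 := Set.Icc_subset_Icc le_rfl hc₀0.le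
  have hSclosed : IsClosed S :=
    (hu.mono hS_sub).preimage_isClosed_of_isClosed isClosed_Icc isClosed_Ici
  have hScompact : IsCompact S :=
    isCompact_Icc.of_isClosed_subset hSclosed Set.inter_subset_left
  have hSne : S.Nonempty := ⟨y₁, ⟨hy₁.1, hy₁c₀⟩, hpos⟩
  set b : ℝ := sSup S with hb_def
  have hbS : b ∈ S := hScompact.sSup_mem hSne
  have hbh : -h ≤ b := hbS.1.1
  have hb0 : b < 0 := lt_of_le_of_lt hbS.1.2 hc₀0
  have hbIcc : b ∈ Set.Icc (-h) 0 := ⟨hbh, hb0.le⟩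
  have hub : 0 ≤ u b := hbS.2
  have hneg : ∀ y ∈ Set.Ioo b (0:ℝ), u y < 0 := by
    intro y hy
    by_cases hyc : y ≤ c₀
    · by_contra hge
      push_neg at hge
      have : y ∈ S := ⟨⟨le_trans hbh hy.1.le, hyc⟩, hge⟩
      exact absurd (le_csSup hScompact.bddAbove this) (not_le.mpr hy.1)
    · exact hIoo y ⟨lt_of_not_ge hyc, hy.2⟩
  have hIooSub : Set.Ioo b (0:ℝ) ⊆ Set.Icc (-h) 0 :=
    fun y hy => ⟨le_trans hbh hy.1.le, hy.2.le⟩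
  have hNe : (𝓝[Set.Ioo b (0:ℝ)] b).NeBot := by
    rw [nhdsWithin_Ioo_eq_nhdsGT hb0]
    infer_instance
  -- main claim: there is y ∈ (b,0) with u y > 0, contradicting hneg
  suffices hsuff : ∃ y ∈ Set.Ioo b (0:ℝ), 0 < u y by
    obtain ⟨y, hy, hy'⟩ := hsuff
    exact absurd (hneg y hy) (not_lt.mpr hy'.le)
  rcases eq_or_lt_of_le hub with hub0 | hub0
  swap
  · -- u b > 0 : continuity
    have hEv : ∀ᶠ y in 𝓝[Set.Icc (-h) 0] b, 0 < u y :=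
      (hu b hbIcc).eventually (eventually_gt_nhds hub0)
    have h1 : ∀ᶠ y in 𝓝[Set.Ioo b (0:ℝ)] b, 0 < u y :=
      hEv.filter_mono (nhdsWithin_mono _ hIooSub)
    have h2 : ∀ᶠ y in 𝓝[Set.Ioo b (0:ℝ)] b, y ∈ Set.Ioo b (0:ℝ) := self_mem_nhdsWithin
    obtain ⟨y, hy1, hy2⟩ := (h1.and h2).exists
    exact ⟨y, hy2, hy1⟩
  · -- u b = 0 : Wronskian argument
    have hub0' : u b = 0 := hub0.symm
    set W : ℝ → ℝ := fun y => u' y * Real.cos (q * y) + u y * (Real.sin (q * y) * q)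
      with hW_def
    have hW0 : W 0 = u' 0 := by simp [hW_def, hbc]
    have hWderiv : ∀ y ∈ Set.Ioo (-h) (0:ℝ),
        HasDerivAt W ((u'' y + q ^ 2 * u y) * Real.cos (q * y)) y := by
      intro y hy
      have hlin : HasDerivAt (fun z : ℝ => q * z) q y := by
        simpa using (hasDerivAt_id y).const_mul q
      have hw : HasDerivAt (fun z : ℝ => Real.cos (q * z)) (-Real.sin (q * y) * q) y :=
        (Real.hasDerivAt_cos (q * y)).comp y hlin
      have hs : HasDerivAt (fun z : ℝ => Real.sin (q * z) * q)
          (Real.cos (q * y) * q * q) y :=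
        ((Real.hasDerivAt_sin (q * y)).comp y hlin).mul_const q
      have hu_at : HasDerivAt u (u' y) y :=
        (hd y ⟨hy.1.le, hy.2.le⟩).hasDerivAt (Icc_mem_nhds hy.1 hy.2)
      have hW' : HasDerivAt W
          ((u'' y * Real.cos (q * y) + u' y * (-Real.sin (q * y) * q)) +
           (u' y * (Real.sin (q * y) * q) + u y * (Real.cos (q * y) * q * q))) y :=
        ((hder y hy).mul hw).add (hu_at.mul hs)
      convert hW' using 1
      have : q * q = q ^ 2 := by ring
      ring
    have hsubIcc : Set.Icc b (0:ℝ) ⊆ Set.Icc (-h) 0 := Set.Icc_subset_Icc hbh le_rfl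
    have hcont : ContinuousOn W (Set.Icc b 0) := by
      apply ContinuousOn.add
      · exact (hu'.mono hsubIcc).mul
          ((Real.continuous_cos.comp (continuous_const.mul continuous_id)).continuousOn)
      · exact (hu.mono hsubIcc).mul
          (((Real.continuous_sin.comp (continuous_const.mul continuous_id)).mul
            continuous_const).continuousOn)
    have hanti : StrictAntiOn W (Set.Icc b 0) := by
      apply strictAntiOn_of_deriv_neg (convex_Icc b 0) hcont
      rw [interior_Icc]
      intro x hx
      have hxIoo : x ∈ Set.Ioo (-h) (0:ℝ) := ⟨lt_of_le_of_lt hbh hx.1, hx.2⟩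
      rw [(hWderiv x hxIoo).deriv]
      have hux : u x < 0 := hneg x hx
      have hcx : c x ≤ K := le_trans (hMle x ⟨hxIoo.1.le, hxIoo.2.le⟩) (le_max_left _ _)
      have hcq : c x < q ^ 2 := by rw [hqsq]; exact lt_of_le_of_lt hcx hKq2
      have hcospos : 0 < Real.cos (q * x) := hcos x ⟨hxIoo.1.le, hxIoo.2.le⟩
      have hle : u'' x + q ^ 2 * u x ≤ (q ^ 2 - c x) * u x := by
        have := hineq x hxIoo
        nlinarith
      have hlt : (q ^ 2 - c x) * u x < 0 :=
        mul_neg_of_pos_of_neg (by linarith) hux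
      exact mul_neg_of_neg_of_pos (lt_of_le_of_lt hle hlt) hcospos
    have hWb : W 0 < W b :=
      hanti (Set.left_mem_Icc.mpr hb0.le) (Set.right_mem_Icc.mpr hb0.le) hb0
    have hu'b : 0 < u' b := by
      have hWbval : W b = u' b * Real.cos (q * b) := by simp [hW_def, hub0']
      have hcb : 0 < Real.cos (q * b) := hcos b hbIcc
      nlinarith [hWb, hW0]
    -- slope at b
    have hslopeb := hasDerivWithinAt_iff_tendsto_slope.mp (hd b hbIcc)
    have hevb : ∀ᶠ y in 𝓝[Set.Icc (-h) 0 \ {b}] b, 0 < slope u b y :=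
      hslopeb.eventually (eventually_gt_nhds hu'b)
    have hmonob : 𝓝[Set.Ioo b (0:ℝ)] b ≤ 𝓝[Set.Icc (-h) 0 \ {b}] b := by
      apply nhdsWithin_mono
      intro y hy
      exact ⟨hIooSub hy, ne_of_gt hy.1⟩
    have h1 : ∀ᶠ y in 𝓝[Set.Ioo b (0:ℝ)] b, 0 < slope u b y := hevb.filter_mono hmonob
    have h2 : ∀ᶠ y in 𝓝[Set.Ioo b (0:ℝ)] b, y ∈ Set.Ioo b (0:ℝ) := self_mem_nhdsWithin
    obtain ⟨y, hy1, hy2⟩ := (h1.and h2).exists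
    refine ⟨y, hy2, ?_⟩
    rw [slope_def_field, hub0', sub_zero] at hy1
    have hyb : 0 < y - b := by linarith [hy2.1]
    rcases div_pos_iff.mp hy1 with ⟨ha, _⟩ | ⟨_, hb'⟩
    · exact ha
    · linarith
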